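/- Let W, X be M×M Hermitian matrices with X positive definite and tr(X) = 1. Then for all s ∈ [0,1], tr(X^{1-s} W X^s W) ≥ (tr(X W))², with equality if and only if W is a scalar multiple of the identity. -/

import Mathlib

open Matrix
open scoped ComplexOrder

/-- The real power `X ^ s` of a Hermitian matrix `X`, defined through the functional calculus
(spectral decomposition): `X^s = U diag(λᵢ^s) U†`. -/
noncomputable def hermPow {M : ℕ} {X : Matrix (Fin M) (Fin M) ℂ} (hX : X.IsHermitian)
    (s : ℝ) : Matrix (Fin M) (Fin M) ℂ :=
  (hX.eigenvectorUnitary : Matrix (Fin M) (Fin M) ℂ) *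
    Matrix.diagonal (fun i => ((hX.eigenvalues i ^ s : ℝ) : ℂ)) *
      (star (hX.eigenvectorUnitary : Matrix (Fin M) (Fin M) ℂ))

/-- for Hermitian `W`, Hermitian positive definite `X` with `tr X = 1`, and any
`s ∈ [0,1]`, one has `tr(X^{1-s} W X^s W) ≥ (tr(X W))²`, with equality iff `W ∝ I`. -/
theorem trace_jensen_ineq {M : ℕ} (X W : Matrix (Fin M) (Fin M) ℂ)
    (hX : X.IsHermitian) (hW : W.IsHermitian) (hXpd : X.PosDef) (htr : X.trace = 1)
    (s : ℝ) (hs : s ∈ Set.Icc (0 : ℝ) 1) :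
    (Matrix.trace (hermPow hX (1 - s) * W * hermPow hX s * W)).re ≥
        ((Matrix.trace (X * W)).re) ^ 2 ∧
      ((Matrix.trace (hermPow hX (1 - s) * W * hermPow hX s * W)).re =
          ((Matrix.trace (X * W)).re) ^ 2 ↔ ∃ c : ℂ, W = c • (1 : Matrix (Fin M) (Fin M) ℂ)) := by
  classical
  set U : Matrix (Fin M) (Fin M) ℂ := (hX.eigenvectorUnitary : Matrix (Fin M) (Fin M) ℂ) with hU
  have hUU : U * star U = 1 := (Matrix.mem_unitaryGroup_iff).mp hX.eigenvectorUnitary.2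
  have hUU' : star U * U = 1 := (Matrix.mem_unitaryGroup_iff').mp hX.eigenvectorUnitary.2
  set lam := hX.eigenvalues with hlam
  set B := star U * W * U with hBdef
  have hBH : B.IsHermitian := by
    rw [hBdef, Matrix.star_eq_conjTranspose]
    exact Matrix.isHermitian_conjTranspose_mul_mul U hW
  have hBsym : ∀ i j, B j i = (starRingEnd ℂ) (B i j) := by
    intro i j
    conv_lhs => rw [← hBH]
    simp [Matrix.conjTranspose_apply]
  have hWUB : U * B * star U = W := by
    have h : U * B * star U = (U * star U) * W * (U * star U) := by
      rw [hBdef]; simp only [mul_assoc]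
    rw [h, hUU, one_mul, mul_one]
  have hP : ∀ r : ℝ, hermPow hX r
      = U * Matrix.diagonal (fun i => ((lam i ^ r : ℝ) : ℂ)) * star U := fun r => rfl
  have cancel : ∀ A : Matrix (Fin M) (Fin M) ℂ, star U * (U * A) = A := fun A => by
    rw [← mul_assoc, hUU', one_mul]
  -- main trace formula
  have key : ∀ t u : ℝ, Matrix.trace (hermPow hX t * W * hermPow hX u * W)
      = ((∑ i, ∑ j, lam i ^ t * lam j ^ u * Complex.normSq (B i j) : ℝ) : ℂ) := by
    intro t u
    rw [hP, hP, ← hWUB]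
    simp only [mul_assoc]
    simp only [cancel]
    rw [Matrix.trace_mul_comm]
    simp only [mul_assoc, hUU', mul_one]
    rw [Matrix.trace]
    push_cast
    refine Finset.sum_congr rfl fun i _ => ?_
    rw [Matrix.diag_apply, Matrix.mul_apply]
    rw [Finset.sum_eq_single i (fun k _ hk => by
      simp [Matrix.diagonal_apply_ne' _ hk]) (fun h => absurd (Finset.mem_univ i) h)]
    rw [Matrix.diagonal_apply_eq, Matrix.mul_apply, Finset.mul_sum]
    refine Finset.sum_congr rfl fun j _ => ?_
    rw [Matrix.diagonal_mul, hBsym i j]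
    linear_combination ((lam i ^ t : ℝ) : ℂ) * ((lam j ^ u : ℝ) : ℂ) * Complex.mul_conj (B i j)
  set b : Fin M → ℝ := fun i => (B i i).re with hb
  have hBii : ∀ i, B i i = ((b i : ℝ) : ℂ) := by
    intro i
    have := hBsym i i
    exact (Complex.conj_eq_iff_re.mp this.symm).symm
  -- trace (X * W)
  have keyXW : Matrix.trace (X * W) = ((∑ i, lam i * b i : ℝ) : ℂ) := by
    conv_lhs => rw [hX.spectral_theorem, Unitary.conjStarAlgAut_apply, ← hWUB]
    simp only [← hU, ← hlam]
    simp only [mul_assoc]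
    simp only [cancel]
    rw [Matrix.trace_mul_comm]
    simp only [mul_assoc, hUU', mul_one]
    rw [Matrix.trace]
    push_cast
    refine Finset.sum_congr rfl fun i _ => ?_
    rw [Matrix.diag_apply, Matrix.diagonal_mul, hBii i]
    push_cast
    rfl
  -- sum of eigenvalues is 1
  have hsum1 : (∑ i, lam i) = 1 := by
    have h : X.trace = ((∑ i, lam i : ℝ) : ℂ) := by
      conv_lhs => rw [hX.spectral_theorem, Unitary.conjStarAlgAut_apply]
      simp only [← hU, ← hlam]
      rw [Matrix.trace_mul_comm, cancel, Matrix.trace_diagonal]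
      push_cast
      rfl
    rw [htr] at h
    exact_mod_cast h.symm
  have hlampos : ∀ i, 0 < lam i := fun i => hXpd.eigenvalues_pos i
  rw [key (1-s) s, keyXW, Complex.ofReal_re, Complex.ofReal_re]
  set m := ∑ i, lam i * b i with hm
  set L := ∑ i, ∑ j, lam i ^ (1 - s) * lam j ^ s * Complex.normSq (B i j) with hL
  set E := ∑ i, ∑ j ∈ Finset.univ.erase i,
      lam i ^ (1 - s) * lam j ^ s * Complex.normSq (B i j) with hEdef
  set V := ∑ i, lam i * (b i - m) ^ 2 with hVdef
  have hterm_nonneg : ∀ i j, 0 ≤ lam i ^ (1 - s) * lam j ^ s * Complex.normSq (B i j) :=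
    fun i j => mul_nonneg (mul_nonneg (Real.rpow_nonneg (hlampos i).le _)
      (Real.rpow_nonneg (hlampos j).le _)) (Complex.normSq_nonneg _)
  have hLsplit : L = (∑ i, lam i * b i ^ 2) + E := by
    rw [hL, hEdef, ← Finset.sum_add_distrib]
    refine Finset.sum_congr rfl fun i _ => ?_
    rw [← Finset.add_sum_erase _ _ (Finset.mem_univ i)]
    congr 1
    rw [hBii i, Complex.normSq_ofReal, ← Real.rpow_add (hlampos i), sub_add_cancel,
      Real.rpow_one]
    ring
  have hVeq : V = (∑ i, lam i * b i ^ 2) - m ^ 2 := by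
    calc V = ∑ i, (lam i * b i ^ 2 - 2 * m * (lam i * b i) + m ^ 2 * lam i) :=
        Finset.sum_congr rfl fun i _ => by ring
      _ = (∑ i, lam i * b i ^ 2) - 2 * m * (∑ i, lam i * b i) + m ^ 2 * (∑ i, lam i) := by
        rw [Finset.sum_add_distrib, Finset.sum_sub_distrib, ← Finset.mul_sum, ← Finset.mul_sum]
      _ = _ := by rw [hsum1, ← hm]; ring
  have hkey2 : L = m ^ 2 + E + V := by rw [hLsplit]; linarith [hVeq]
  have hE0 : 0 ≤ E := Finset.sum_nonneg fun i _ => Finset.sum_nonneg fun j _ => hterm_nonneg i j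
  have hV0 : 0 ≤ V := Finset.sum_nonneg fun i _ => mul_nonneg (hlampos i).le (sq_nonneg _)
  constructor
  · rw [hkey2]; nlinarith
  constructor
  · intro hLm
    have hE : E = 0 := by nlinarith [hkey2]
    have hV : V = 0 := by nlinarith [hkey2]
    have hbm : ∀ i, b i = m := by
      intro i
      have h1 := (Finset.sum_eq_zero_iff_of_nonneg
        (fun i _ => mul_nonneg (hlampos i).le (sq_nonneg _))).mp hV i (Finset.mem_univ i)
      have h2 : (b i - m) ^ 2 = 0 :=
        (mul_eq_zero.mp h1).resolve_left (hlampos i).ne'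
      have := sq_eq_zero_iff.mp h2
      linarith
    have hoff : ∀ i j, i ≠ j → B i j = 0 := by
      intro i j hij
      have h1 := (Finset.sum_eq_zero_iff_of_nonneg
        (fun i _ => Finset.sum_nonneg fun j _ => hterm_nonneg i j)).mp hE i (Finset.mem_univ i)
      have h2 := (Finset.sum_eq_zero_iff_of_nonneg
        (fun j _ => hterm_nonneg i j)).mp h1 j (Finset.mem_erase.mpr ⟨hij.symm, Finset.mem_univ j⟩)
      have hpos : 0 < lam i ^ (1 - s) * lam j ^ s :=
        mul_pos (Real.rpow_pos_of_pos (hlampos i) _) (Real.rpow_pos_of_pos (hlampos j) _)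
      exact Complex.normSq_eq_zero.mp ((mul_eq_zero.mp h2).resolve_left hpos.ne')
    refine ⟨(m : ℂ), ?_⟩
    rw [← hWUB]
    have hBm : B = (m : ℂ) • 1 := by
      ext i j
      by_cases hij : i = j
      · subst hij; rw [hBii i, hbm i]; simp [Matrix.one_apply]
      · rw [hoff i j hij]; simp [Matrix.one_apply_ne hij]
    rw [hBm, Matrix.mul_smul, Matrix.smul_mul, mul_one, hUU]
  · rintro ⟨c, hc⟩
    have hBc : B = c • 1 := by
      rw [hBdef, hc, Matrix.mul_smul, mul_one, Matrix.smul_mul, hUU']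
    have hM : Nonempty (Fin M) := by
      by_contra h
      rw [not_nonempty_iff] at h
      simp [Finset.univ_eq_empty] at hsum1
    obtain ⟨i0⟩ := hM
    have h1 : (starRingEnd ℂ) c = c := by
      have h2 := congrFun (congrFun (hW.symm ▸ rfl : Wᴴ = W) i0) i0
      rw [hc] at h2
      simpa [Matrix.conjTranspose_apply, Matrix.one_apply] using h2
    have hbc : ∀ i, b i = c.re := by
      intro i
      show (B i i).re = c.re
      rw [hBc]
      simp [Matrix.one_apply]
    have hm' : m = c.re := by
      rw [hm]
      calc (∑ i, lam i * b i) = ∑ i, lam i * c.re :=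
          Finset.sum_congr rfl fun i _ => by rw [hbc]
        _ = (∑ i, lam i) * c.re := by rw [Finset.sum_mul]
        _ = c.re := by rw [hsum1, one_mul]
    have hEz : E = 0 := by
      rw [hEdef]
      refine Finset.sum_eq_zero fun i _ => Finset.sum_eq_zero fun j hj => ?_
      have hij : i ≠ j := (Finset.ne_of_mem_erase hj).symm
      rw [hBc]
      simp [Matrix.one_apply_ne hij]
    have hVz : V = 0 := by
      rw [hVdef]
      refine Finset.sum_eq_zero fun i _ => ?_
      rw [hbc, hm']
      ring
    rw [hkey2, hEz, hVz]
    ring
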